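/- For α > 0, ∑_{j=0}^{n-1} ((2j+2)^α − (2j+1)^α) = (1/2)(2n)^α + o(n^α) as n → ∞. -/

import Mathlib

open Filter Finset

/-- For `α > 0`, `∑_{j=0}^{n-1} ((2j+2)^α − (2j+1)^α) = (1/2)(2n)^α + o(n^α)`. -/
theorem stmt8 (α : ℝ) (hα : 0 < α) :
    Tendsto
      (fun n : ℕ =>
        ((∑ j ∈ range n, ((2 * (j : ℝ) + 2) ^ α - (2 * (j : ℝ) + 1) ^ α))
            - (1 / 2) * (2 * (n : ℝ)) ^ α) / (n : ℝ) ^ α)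
      atTop (nhds 0) := by
  set N : ℝ → ℝ := fun t => (2 + 2 * t) ^ α - 2 * (2 + t) ^ α + 2 ^ α with hN
  set D : ℝ → ℝ := fun t => (1 + t) ^ α - 1 with hD
  set c : ℕ → ℝ := fun j =>
    ((2 * (j : ℝ) + 2) ^ α - (2 * (j : ℝ) + 1) ^ α)
      - (1 / 2) * ((2 * ((j : ℝ) + 1)) ^ α - (2 * (j : ℝ)) ^ α) with hc
  set g : ℕ → ℝ := fun j => ((j : ℝ) + 1) ^ α - (j : ℝ) ^ α with hg
  have hgpos : ∀ j : ℕ, 0 < g j := by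
    intro j
    have : (j : ℝ) ^ α < ((j : ℝ) + 1) ^ α :=
      Real.rpow_lt_rpow (Nat.cast_nonneg j) (lt_add_one _) hα
    simpa [hg] using sub_pos.2 this
  -- derivative facts
  have hDN : HasDerivAt N 0 0 := by
    have h1 : HasDerivAt (fun t : ℝ => (2 + 2 * t) ^ α) (α * 2 ^ (α - 1) * 2) 0 := by
      have ha : HasDerivAt (fun t : ℝ => 2 + 2 * t) 2 0 := by
        simpa using ((hasDerivAt_id (0:ℝ)).const_mul 2).const_add 2
      have hb : HasDerivAt (fun x : ℝ => x ^ α) (α * (2:ℝ) ^ (α - 1)) (2 + 2 * 0) := by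
        norm_num
        simpa using Real.hasDerivAt_rpow_const (p := α) (x := 2) (Or.inl two_ne_zero)
      exact hb.comp 0 ha
    have h2 : HasDerivAt (fun t : ℝ => (2 + t) ^ α) (α * 2 ^ (α - 1) * 1) 0 := by
      have ha : HasDerivAt (fun t : ℝ => 2 + t) 1 0 := by
        simpa using (hasDerivAt_id (0:ℝ)).const_add 2
      have hb : HasDerivAt (fun x : ℝ => x ^ α) (α * (2:ℝ) ^ (α - 1)) (2 + 0) := by
        norm_num
        simpa using Real.hasDerivAt_rpow_const (p := α) (x := 2) (Or.inl two_ne_zero)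
      exact hb.comp 0 ha
    have key := (h1.sub (h2.const_mul 2)).add_const ((2:ℝ) ^ α)
    rw [hN]
    exact key.congr_deriv (by ring)
  have hDD : HasDerivAt D α 0 := by
    have ha : HasDerivAt (fun t : ℝ => 1 + t) 1 0 := by
      simpa using (hasDerivAt_id (0:ℝ)).const_add 1
    have hb : HasDerivAt (fun x : ℝ => x ^ α) (α * (1:ℝ) ^ (α - 1)) (1 + 0) := by
      norm_num
      simpa using Real.hasDerivAt_rpow_const (p := α) (x := 1) (Or.inl one_ne_zero)
    have key := (hb.comp 0 ha).sub_const 1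
    rw [hD]
    exact key.congr_deriv (by simp)
  -- limit along 1/j
  have hinv : Tendsto (fun j : ℕ => 1 / (j : ℝ)) atTop (nhdsWithin 0 {(0:ℝ)}ᶜ) := by
    apply tendsto_nhdsWithin_of_tendsto_nhds_of_eventually_within
    · exact tendsto_one_div_atTop_nhds_zero_nat
    · filter_upwards [eventually_ge_atTop 1] with j hj
      have : (0:ℝ) < (j:ℝ) := by exact_mod_cast Nat.pos_of_ne_zero (by omega)
      simp only [Set.mem_compl_iff, Set.mem_singleton_iff]
      exact (ne_of_gt (one_div_pos.2 this))
  have hNs : Tendsto (fun j : ℕ => N (1 / (j:ℝ)) / (1 / (j:ℝ))) atTop (nhds 0) := by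
    have := (hasDerivAt_iff_tendsto_slope.1 hDN).comp hinv
    refine this.congr ?_
    intro j
    have hN0 : N 0 = 0 := by simp only [hN]; norm_num; ring
    simp [slope_def_field, hN0, div_eq_mul_inv]
  have hDs : Tendsto (fun j : ℕ => D (1 / (j:ℝ)) / (1 / (j:ℝ))) atTop (nhds α) := by
    have := (hasDerivAt_iff_tendsto_slope.1 hDD).comp hinv
    refine this.congr ?_
    intro j
    have hD0 : D 0 = 0 := by simp [hD]
    simp [slope_def_field, hD0, div_eq_mul_inv]
  have hratio : Tendsto (fun j : ℕ => c j / g j) atTop (nhds 0) := by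
    have hq : Tendsto (fun j : ℕ =>
        (1/2 : ℝ) * ((N (1 / (j:ℝ)) / (1 / (j:ℝ))) / (D (1 / (j:ℝ)) / (1 / (j:ℝ)))))
        atTop (nhds 0) := by
      have := (hNs.div hDs hα.ne').const_mul (1/2 : ℝ)
      simpa using this
    refine hq.congr' ?_
    filter_upwards [eventually_ge_atTop 1] with j hj
    have hjpos : (0:ℝ) < (j:ℝ) := by exact_mod_cast Nat.pos_of_ne_zero (by omega)
    have hjne : ((j:ℝ)) ≠ 0 := ne_of_gt hjpos
    set t : ℝ := 1 / (j:ℝ) with ht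
    have htpos : 0 < t := one_div_pos.2 hjpos
    have hDpos : 0 < D t := by
      have : (1:ℝ) < (1 + t) ^ α := by
        refine Real.one_lt_rpow_iff_of_pos (by linarith) |>.2 ?_
        exact Or.inl ⟨by linarith, hα⟩
      simpa [hD] using sub_pos.2 this
    have hja : (0:ℝ) < (j:ℝ) ^ α := Real.rpow_pos_of_pos hjpos α
    have e1 : (2 * (j:ℝ) + 2) ^ α = (j:ℝ) ^ α * (2 + 2 * t) ^ α := by
      rw [← Real.mul_rpow hjpos.le (by positivity)]
      congr 1
      rw [ht]; field_simp; try ring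
    have e2 : (2 * (j:ℝ) + 1) ^ α = (j:ℝ) ^ α * (2 + t) ^ α := by
      rw [← Real.mul_rpow hjpos.le (by positivity)]
      congr 1
      rw [ht]; field_simp; try ring
    have e3 : (2 * (j:ℝ)) ^ α = (j:ℝ) ^ α * (2:ℝ) ^ α := by
      rw [← Real.mul_rpow hjpos.le (by norm_num)]
      congr 1; ring
    have e4 : ((j:ℝ) + 1) ^ α = (j:ℝ) ^ α * (1 + t) ^ α := by
      rw [← Real.mul_rpow hjpos.le (by positivity)]
      congr 1
      rw [ht]; field_simp
    have e5 : (2 * ((j:ℝ) + 1)) ^ α = (j:ℝ) ^ α * (2 + 2 * t) ^ α := by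
      rw [← Real.mul_rpow hjpos.le (by positivity)]
      congr 1
      rw [ht]; field_simp; try ring
    have hcj : c j = (j:ℝ) ^ α * ((1/2) * N t) := by
      simp only [hc, hN]
      rw [e1, e2, e3, e5]
      ring
    have hgj : g j = (j:ℝ) ^ α * D t := by
      simp only [hg, hD]
      rw [e4]
      ring
    rw [hcj, hgj, mul_div_mul_left _ _ (ne_of_gt hja)]
    have htne : t ≠ 0 := ne_of_gt htpos
    have hDne : D t ≠ 0 := ne_of_gt hDpos
    field_simp
  have hlo : (fun j => c j) =o[atTop] fun j => g j := by
    refine (Asymptotics.isLittleO_iff_tendsto' ?_).2 hratio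
    filter_upwards with j h
    exact absurd h (ne_of_gt (hgpos j))
  have hsg : ∀ n : ℕ, ∑ i ∈ range n, g i = (n:ℝ) ^ α := by
    intro n
    have h := Finset.sum_range_sub (f := fun i : ℕ => ((i:ℝ)) ^ α) n
    simp only [Nat.cast_zero, Real.zero_rpow hα.ne', sub_zero, Nat.cast_add,
      Nat.cast_one] at h
    simpa [hg] using h
  have h'g : Tendsto (fun n : ℕ => ∑ i ∈ range n, g i) atTop atTop := by
    have : Tendsto (fun n : ℕ => ((n:ℝ)) ^ α) atTop atTop :=
      (tendsto_rpow_atTop hα).comp tendsto_natCast_atTop_atTop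
    exact this.congr fun n => (hsg n).symm
  have hsum := hlo.sum_range (fun j => (hgpos j).le) h'g
  have hsc : ∀ n : ℕ, ∑ i ∈ range n, c i =
      (∑ j ∈ range n, ((2 * (j : ℝ) + 2) ^ α - (2 * (j : ℝ) + 1) ^ α))
        - (1 / 2) * (2 * (n : ℝ)) ^ α := by
    intro n
    have htel := Finset.sum_range_sub (f := fun i : ℕ => (2 * (i:ℝ)) ^ α) n
    simp only [Nat.cast_zero, mul_zero, Real.zero_rpow hα.ne', sub_zero, Nat.cast_add,
      Nat.cast_one] at htel
    have htel' : (∑ x ∈ range n, (2 * ((x:ℝ) + 1)) ^ α) - ∑ x ∈ range n, (2 * (x:ℝ)) ^ α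
        = (2 * (n:ℝ)) ^ α := by
      rw [← Finset.sum_sub_distrib]; exact htel
    simp only [hc, Finset.sum_sub_distrib, ← Finset.mul_sum]
    rw [htel']
  simp only [hsc, hsg] at hsum
  exact hsum.tendsto_div_nhds_zero
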